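/- Let c, a ∈ ℝ and define g : ℝ → ℝ by g(z) = (z − c)² + (max z 0 − a)². Then g attains its infimum on ℝ, and every global minimizer z* of g satisfies z* = min c 0 or z* = max ((c + a)/2) 0. -/
import Mathlib

/-- Closed-form solution of the ReLU `z`-update subproblem: the function
`g(z) = (z − c)² + (max z 0 − a)²` attains its infimum, and every global minimizer
equals `min c 0` or `max ((c + a)/2) 0`. -/
theorem relu_z_update_closed_form
    (c a : ℝ) (g : ℝ → ℝ)
    (hg : ∀ z : ℝ, g z = (z - c) ^ 2 + (max z 0 - a) ^ 2) :
    (∃ zstar : ℝ, ∀ z : ℝ, g zstar ≤ g z) ∧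
      (∀ zstar : ℝ, (∀ z : ℝ, g zstar ≤ g z) →
        zstar = min c 0 ∨ zstar = max ((c + a) / 2) 0) := by
  set z1 : ℝ := min c 0 with hz1
  set z2 : ℝ := max ((c + a) / 2) 0 with hz2
  have hz1le : z1 ≤ 0 := min_le_right _ _
  have hz2ge : 0 ≤ z2 := le_max_right _ _
  have hmz1 : max z1 0 = 0 := max_eq_right hz1le
  have hmz2 : max z2 0 = z2 := max_eq_left hz2ge
  -- value formulas
  have hg1 : g z1 = (z1 - c) ^ 2 + a ^ 2 := by
    rw [hg, hmz1]; ring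
  have hg2 : g z2 = (z2 - c) ^ 2 + (z2 - a) ^ 2 := by
    rw [hg, hmz2]
  -- region bounds
  have key1 : ∀ z : ℝ, z ≤ 0 → g z1 ≤ g z := by
    intro z hz
    rw [hg1, hg, max_eq_right hz]
    rcases le_or_gt c 0 with hc | hc
    · have : z1 = c := min_eq_left hc
      rw [this]; nlinarith [sq_nonneg (z - c)]
    · have : z1 = 0 := min_eq_right hc.le
      rw [this]; nlinarith [mul_nonneg (neg_nonneg.2 hz) (by linarith : (0:ℝ) ≤ 2*c - z)]
  have key2 : ∀ z : ℝ, 0 ≤ z → g z2 ≤ g z := by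
    intro z hz
    rw [hg2, hg, max_eq_left hz]
    rcases le_or_gt 0 ((c + a) / 2) with hm | hm
    · have : z2 = (c + a) / 2 := max_eq_left hm
      rw [this]; nlinarith [sq_nonneg (z - (c + a) / 2)]
    · have : z2 = 0 := max_eq_right hm.le
      rw [this]; nlinarith [mul_nonneg hz (by linarith : (0:ℝ) ≤ z - (c + a))]
  constructor
  · rcases le_total (g z1) (g z2) with h | h
    · exact ⟨z1, fun z => by
        rcases le_total z 0 with hz | hz
        · exact key1 z hz
        · exact h.trans (key2 z hz)⟩
    · exact ⟨z2, fun z => by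
        rcases le_total z 0 with hz | hz
        · exact h.trans (key1 z hz)
        · exact key2 z hz⟩
  · intro zs hmin
    rcases le_total zs 0 with hzs | hzs
    · left
      have h1 : g zs ≤ g z1 := hmin z1
      have h2 : g z1 ≤ g zs := key1 zs hzs
      have heq : g zs = g z1 := le_antisymm h1 h2
      rw [hg1, hg, max_eq_right hzs] at heq
      have heq' : (zs - c) ^ 2 = (z1 - c) ^ 2 := by nlinarith
      rcases le_or_gt c 0 with hc | hc
      · have hz1c : z1 = c := min_eq_left hc
        rw [hz1c] at heq' ⊢
        nlinarith
      · have hz1c : z1 = 0 := min_eq_right hc.le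
        rw [hz1c] at heq' ⊢
        by_contra hne
        have hlt : zs < 0 := lt_of_le_of_ne hzs hne
        nlinarith [mul_pos (neg_pos.2 hlt) (by linarith : (0:ℝ) < 2*c - zs)]
    · right
      have h1 : g zs ≤ g z2 := hmin z2
      have h2 : g z2 ≤ g zs := key2 zs hzs
      have heq : g zs = g z2 := le_antisymm h1 h2
      rw [hg2, hg, max_eq_left hzs] at heq
      rcases le_or_gt 0 ((c + a) / 2) with hm | hm
      · have hz2c : z2 = (c + a) / 2 := max_eq_left hm
        rw [hz2c] at heq ⊢
        have hsq : (zs - (c + a) / 2) ^ 2 = 0 := by linear_combination heq / 2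
        have := pow_eq_zero_iff (n := 2) (by norm_num) |>.mp hsq
        linarith
      · have hz2c : z2 = 0 := max_eq_right hm.le
        rw [hz2c] at heq ⊢
        by_contra hne
        have hlt : 0 < zs := lt_of_le_of_ne hzs (Ne.symm hne)
        have hexp : zs * (zs - (c + a)) = 0 := by linear_combination heq / 2
        nlinarith [mul_pos hlt (by linarith : (0:ℝ) < zs - (c + a))]
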